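/- Let G be a finite abelian group with |G| ≥ 3. Then Δ(G) is a finite nonempty interval of integers with min Δ(G) = 1, i.e. Δ(G) = [1, max Δ(G)]. -/

import Mathlib

namespace ArXivSeminormal

attribute [local instance] Classical.propDecidable

noncomputable section

/-! ### Generic factorization theory in commutative monoids -/

variable {M : Type*} [CommMonoid M]

/-- The set of factorizations of `a` (in the sense of `Z(a)`): multisets of irreducible
elements of the reduced monoid (modelled by `Associates M`) whose product is the class
of `a`. -/
def Factorizations (a : M) : Set (Multiset (Associates M)) :=
  {z | (∀ x ∈ z, Irreducible x) ∧ z.prod = Associates.mk a}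

/-- The set of lengths `L(a)` of an element `a`. -/
def lengthSet (a : M) : Set ℕ :=
  {k | ∃ z ∈ Factorizations a, Multiset.card z = k}

/-- The set of (successive) distances `Δ(L)` of a set `L ⊆ ℕ`. -/
def DeltaSet (L : Set ℕ) : Set ℕ :=
  {d | ∃ k l, k ∈ L ∧ l ∈ L ∧ k < l ∧ (∀ m, k < m → m < l → m ∉ L) ∧ d = l - k}

/-- The set of distances `Δ(H)` of a monoid `H`. -/
def DeltaMonoid (M : Type*) [CommMonoid M] : Set ℕ :=
  ⋃ a : M, DeltaSet (lengthSet a)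

/-- The distance between two factorizations:
`d(z,z') = max (card (z - gcd z z')) (card (z' - gcd z z'))`. -/
def factorDist (z z' : Multiset (Associates M)) : ℕ :=
  max (Multiset.card (z - z')) (Multiset.card (z' - z))

/-- The catenary degree `c(H)` of a monoid `H`: the smallest `N ∈ ℕ∞` such that any two
factorizations of any element are connected by a chain of factorizations with consecutive
distances at most `N`. -/
def catenaryDegree (M : Type*) [CommMonoid M] : ℕ∞ :=
  sInf {N : ℕ∞ | ∀ (a : M), ∀ z ∈ Factorizations a, ∀ z' ∈ Factorizations a,
    ∃ c : List (Multiset (Associates M)), c.head? = some z ∧ c.getLast? = some z' ∧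
      (∀ w ∈ c, w ∈ Factorizations a) ∧
      List.Chain' (fun u v => (factorDist u v : ℕ∞) ≤ N) c}

/-- A monoid is factorial if every element has a unique factorization. -/
def IsFactorialMonoid (M : Type*) [CommMonoid M] : Prop :=
  ∀ a : M, ∃! z : Multiset (Associates M), z ∈ Factorizations a

/-! ### Free commutative monoids, block monoids, Davenport constant -/

/-- The free abelian (multiplicatively written) monoid on a set `P`. -/
abbrev FreeCM (P : Type*) := Multiplicative (Multiset P)

/-- The sum homomorphism `σ : F(G) → G`. -/
def sigmaHom (G : Type*) [AddCommMonoid G] : FreeCM G →* Multiplicative G :=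
  AddMonoidHom.toMultiplicative
    { toFun := Multiset.sum
      map_zero' := Multiset.sum_zero
      map_add' := Multiset.sum_add }

/-- The monoid of zero-sum sequences over `G`. -/
def BlockMonoid (G : Type*) [AddCommMonoid G] : Submonoid (FreeCM G) :=
  MonoidHom.mker (sigmaHom G)

/-- The Davenport constant of `G`: the supremum of lengths of minimal zero-sum sequences. -/
def Davenport (G : Type*) [AddCommMonoid G] : ℕ :=
  sSup {k | ∃ u : BlockMonoid G, Irreducible u ∧
    Multiset.card (Multiplicative.toAdd (u : FreeCM G)) = k}

/-! ### Reduced seminormal finitely primary monoids -/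

/-- The `Fin s →₀ ℕ` function with all values `1`, i.e. the exponent vector of
`q_1 ⋯ q_s`. -/
def allOnes (s : ℕ) : Fin s →₀ ℕ := Finsupp.equivFunOnFinite.symm fun _ => 1

/-- The reduced seminormal finitely primary monoid of rank `s` with unit group `U` of the
complete integral closure:
`D = {ε q_1^{k_1} ⋯ q_s^{k_s} : ε ∈ U, all k_j ≥ 1} ∪ {1} ⊆ U × [q_1,…,q_s]`. -/
def seminormalD (U : Type*) [CommGroup U] (s : ℕ) :
    Submonoid (U × Multiplicative (Fin s →₀ ℕ)) where
  carrier := {x | x = 1 ∨ ∀ j, 1 ≤ Multiplicative.toAdd x.2 j}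
  one_mem' := Or.inl rfl
  mul_mem' := by
    rintro a b (rfl | ha) (rfl | hb)
    · exact Or.inl (mul_one 1)
    · rw [Set.mem_setOf_eq, one_mul]; exact Or.inr hb
    · rw [Set.mem_setOf_eq, mul_one]; exact Or.inr ha
    · refine Or.inr fun j => ?_
      have h1 := ha j
      have h2 := hb j
      have h3 : Multiplicative.toAdd ((a * b).2) j
          = Multiplicative.toAdd a.2 j + Multiplicative.toAdd b.2 j := rfl
      omega

/-! ### T-block monoids (Setting (S)) -/

/-- The monoid `T = D_1 × ⋯ × D_n`. -/
abbrev Tm {n : ℕ} (U : Fin n → Type*) [∀ i, CommGroup (U i)] (s : Fin n → ℕ) :=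
  ∀ i, ↥(seminormalD (U i) (s i))

/-- The monoid `D̂_1 × ⋯ × D̂_n`. -/
abbrev HatTm {n : ℕ} (U : Fin n → Type*) [∀ i, CommGroup (U i)] (s : Fin n → ℕ) :=
  ∀ i, U i × Multiplicative (Fin (s i) →₀ ℕ)

/-- The monoid `F = F(G) × T`. -/
abbrev Fm (G : Type*) {n : ℕ} (U : Fin n → Type*) [∀ i, CommGroup (U i)] (s : Fin n → ℕ) :=
  FreeCM G × Tm U s

/-- The homomorphism `F → G`, `S·t ↦ σ(S) + ι(t)`, whose kernel is the `T`-block monoid;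
it computes the class `[a] ∈ G ≅ q(F)/q(B)` of `a ∈ F`. -/
def TBlockPhi (G : Type*) [AddCommGroup G] {n : ℕ} (U : Fin n → Type*) [∀ i, CommGroup (U i)]
    (s : Fin n → ℕ) (iota : Tm U s →* Multiplicative G) : Fm G U s →* Multiplicative G :=
  ((sigmaHom G).comp (MonoidHom.fst _ _)) * (iota.comp (MonoidHom.snd _ _))

/-- The `T`-block monoid `B = B(G, T, ι) = {S·t ∈ F(G) × T : σ(S) + ι(t) = 0}`. -/
def TBlock (G : Type*) [AddCommGroup G] {n : ℕ} (U : Fin n → Type*) [∀ i, CommGroup (U i)]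
    (s : Fin n → ℕ) (iota : Tm U s →* Multiplicative G) : Submonoid (Fm G U s) :=
  MonoidHom.mker (TBlockPhi G U s iota)

/-- The inclusion `T = D_1 × ⋯ × D_n → D̂_1 × ⋯ × D̂_n`. -/
def embedT {n : ℕ} (U : Fin n → Type*) [∀ i, CommGroup (U i)] (s : Fin n → ℕ) :
    Tm U s →* HatTm U s :=
  Pi.monoidHom fun i => (seminormalD (U i) (s i)).subtype.comp
    (Pi.evalMonoidHom (fun j => ↥(seminormalD (U j) (s j))) i)

/-- The norm `‖A‖ = k + 2·Σ_i max L_{D_i}(a_i)` of `A = g_1⋯g_k a_1⋯a_n ∈ F`. -/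
def normF (G : Type*) {n : ℕ} (U : Fin n → Type*) [∀ i, CommGroup (U i)] (s : Fin n → ℕ)
    (A : Fm G U s) : ℕ :=
  Multiset.card (Multiplicative.toAdd A.1) + 2 * ∑ i, sSup (lengthSet (A.2 i))

/-- The class `[ε] ∈ G` of a unit `ε ∈ D̂_ν^×`. -/
def classOfUnit {G : Type*} [AddCommGroup G] {n : ℕ} (U : Fin n → Type*)
    [∀ i, CommGroup (U i)] (s : Fin n → ℕ) (iotahat : HatTm U s →* Multiplicative G)
    (ν : Fin n) (ε : U ν) : Multiplicative G :=
  iotahat (Pi.mulSingle ν (ε, 1))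

/-- The class `[q_{ν,j}] ∈ G` of the prime `q_{ν,j}` of `D̂_ν`. -/
def classOfPrime {G : Type*} [AddCommGroup G] {n : ℕ} (U : Fin n → Type*)
    [∀ i, CommGroup (U i)] (s : Fin n → ℕ) (iotahat : HatTm U s →* Multiplicative G)
    (ν : Fin n) (j : Fin (s ν)) : Multiplicative G :=
  iotahat (Pi.mulSingle ν (1, Multiplicative.ofAdd (Finsupp.single j 1)))

/-- The quantity `d_ν ∈ {-1, 0, 1, 2}` from Theorem 3.3 (for `G = {0, e}` of order two). -/
def dval {G : Type*} [AddCommGroup G] {n : ℕ} (U : Fin n → Type*) [∀ i, CommGroup (U i)]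
    (s : Fin n → ℕ) (iotahat : HatTm U s →* Multiplicative G) (e : G) (ν : Fin n) : ℤ :=
  if (∀ ε : U ν, classOfUnit U s iotahat ν ε = 1) ∧ s ν = 2 ∧
      (Finset.univ.filter fun j : Fin (s ν) =>
        classOfPrime U s iotahat ν j = Multiplicative.ofAdd e).card = 2 then 2
  else if (∀ ε : U ν, classOfUnit U s iotahat ν ε = 1) ∧ s ν = 1 then 0
  else if (∀ ε : U ν, classOfUnit U s iotahat ν ε = 1) ∧ 2 ≤ s ν ∧
      (Finset.univ.filter fun j : Fin (s ν) =>
        classOfPrime U s iotahat ν j = Multiplicative.ofAdd e).card = 0 then -1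
  else 1

section AuxGY
set_option linter.unusedSectionVars false
set_option linter.unusedVariables false
set_option maxHeartbeats 1000000

variable {G : Type*} [AddCommGroup G]

def IsAtomM (u : Multiset G) : Prop :=
  u ≠ 0 ∧ u.sum = 0 ∧ ∀ t ≤ u, t ≠ 0 → t.sum = 0 → t = u

def IsFactM (a : Multiset G) (z : Multiset (Multiset G)) : Prop :=
  (∀ u ∈ z, IsAtomM u) ∧ z.sum = a

def LSet (a : Multiset G) : Set ℕ := {k | ∃ z, IsFactM a z ∧ Multiset.card z = k}

def DeltaBG (G : Type*) [AddCommGroup G] : Set ℕ :=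
  {d | ∃ A : Multiset G, A.sum = 0 ∧ d ∈ DeltaSet (LSet A)}

lemma le_sum_of_mem {z : Multiset (Multiset G)} {P : Multiset G} (h : P ∈ z) : P ≤ z.sum := by
  obtain ⟨w, rfl⟩ := Multiset.exists_cons_of_mem h
  simp

lemma cons_le_cases {t s : Multiset G} {a : G} (h : t ≤ a ::ₘ s) :
    t ≤ s ∨ ∃ t₀, t = a ::ₘ t₀ ∧ t₀ ≤ s := by
  classical
  by_cases hts : t ≤ s
  · exact Or.inl hts
  · right
    have ha : a ∈ t := by
      by_contra hat
      apply hts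
      rw [Multiset.le_iff_count] at h ⊢
      intro b
      have hb := h b
      rw [Multiset.count_cons] at hb
      by_cases hba : b = a
      · subst hba; simp [Multiset.count_eq_zero_of_notMem hat]
      · simpa [hba] using hb
    obtain ⟨t₀, rfl⟩ := Multiset.exists_cons_of_mem ha
    refine ⟨t₀, rfl, ?_⟩
    rw [Multiset.le_iff_count] at h ⊢
    intro b
    have hb := h b
    rw [Multiset.count_cons, Multiset.count_cons] at hb
    by_cases hba : b = a <;> simp [hba] at hb ⊢ <;> omega

lemma sum_sum_eq_zero {z : Multiset (Multiset G)} (h : ∀ u ∈ z, IsAtomM u) :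
    (z.sum).sum = 0 := by
  induction z using Multiset.induction_on with
  | empty => simp
  | cons P w ih =>
    simp only [Multiset.sum_cons, Multiset.sum_add]
    rw [(h P (Multiset.mem_cons_self _ _)).2.1, ih (fun u hu => h u (Multiset.mem_cons_of_mem hu))]
    simp

lemma fact_sum_eq_zero {a : Multiset G} {z : Multiset (Multiset G)} (h : IsFactM a z) :
    a.sum = 0 := by
  rw [← h.2]; exact sum_sum_eq_zero h.1

lemma card_le_card_sum {z : Multiset (Multiset G)} (h : ∀ u ∈ z, u ≠ 0) :
    Multiset.card z ≤ Multiset.card z.sum := by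
  induction z using Multiset.induction_on with
  | empty => simp
  | cons P w ih =>
    simp only [Multiset.card_cons, Multiset.sum_cons, Multiset.card_add]
    have hP : P ≠ 0 := h P (Multiset.mem_cons_self _ _)
    have : 0 < Multiset.card P := Multiset.card_pos.mpr hP
    have := ih (fun u hu => h u (Multiset.mem_cons_of_mem hu))
    omega

lemma exists_fact : ∀ n (a : Multiset G), Multiset.card a = n → a.sum = 0 →
    ∃ z, IsFactM a z := by
  intro n
  induction n using Nat.strong_induction_on with
  | _ n ih =>
    intro a hcard hsum
    by_cases ha : a = 0
    · exact ⟨0, by simp [IsFactM], by simp [ha]⟩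
    · by_cases hat : IsAtomM a
      · exact ⟨{a}, by simpa [IsFactM] using hat, by simp⟩
      · have : ∃ t ≤ a, t ≠ 0 ∧ t.sum = 0 ∧ t ≠ a := by
          by_contra hc
          push_neg at hc
          exact hat ⟨ha, hsum, fun t ht h0 hs => hc t ht h0 hs⟩
        obtain ⟨t, hta, ht0, hts, htne⟩ := this
        have hsub : a - t + t = a := tsub_add_cancel_of_le hta
        have hs2 : (a - t).sum = 0 := by
          have : (a-t).sum + t.sum = a.sum := by rw [← Multiset.sum_add, hsub]
          rw [hts, hsum] at this; simpa using this
        have hc1 : Multiset.card t < n := by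
          have h1 : Multiset.card t ≤ Multiset.card a := Multiset.card_le_card hta
          have : Multiset.card t ≠ Multiset.card a := fun hh => htne (Multiset.eq_of_le_of_card_le hta (le_of_eq hh.symm))
          omega
        have hc2 : Multiset.card (a - t) < n := by
          have := congrArg Multiset.card hsub
          simp only [Multiset.card_add] at this
          have h0 : 0 < Multiset.card t := Multiset.card_pos.mpr ht0
          omega
        obtain ⟨z1, hz1⟩ := ih _ hc1 t rfl hts
        obtain ⟨z2, hz2⟩ := ih _ hc2 (a - t) rfl hs2
        refine ⟨z1 + z2, ⟨?_, ?_⟩⟩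
        · intro u hu
          rcases Multiset.mem_add.1 hu with h | h
          exacts [hz1.1 u h, hz2.1 u h]
        · rw [Multiset.sum_add, hz1.2, hz2.2, add_comm]
          exact hsub

lemma exists_mem_part {z : Multiset (Multiset G)} {a : G} (h : a ∈ z.sum) :
    ∃ P ∈ z, a ∈ P := by
  induction z using Multiset.induction_on with
  | empty => simp at h
  | cons P w ih =>
    rw [Multiset.sum_cons, Multiset.mem_add] at h
    rcases h with h | h
    · exact ⟨P, Multiset.mem_cons_self _ _, h⟩
    · obtain ⟨Q, hQ, ha⟩ := ih h
      exact ⟨Q, Multiset.mem_cons_of_mem hQ, ha⟩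

lemma atom_contract {u B : Multiset G} {h₁ h₂ : G} (hu : IsAtomM u)
    (he : u = h₁ ::ₘ h₂ ::ₘ B) : IsAtomM ((h₁ + h₂) ::ₘ B) := by
  have hsum : (h₁ + h₂) + B.sum = 0 := by
    have := hu.2.1
    rw [he] at this
    simp only [Multiset.sum_cons] at this
    rw [← add_assoc] at this
    exact this
  refine ⟨Multiset.cons_ne_zero, by simpa using hsum, ?_⟩
  intro t ht ht0 hts
  rcases cons_le_cases ht with htB | ⟨t₀, rfl, ht₀⟩
  · exfalso
    have htu : t ≤ u := le_trans htB (by rw [he]; exact le_trans (Multiset.le_cons_self _ _) (Multiset.le_cons_self _ _))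
    have := hu.2.2 t htu ht0 hts
    subst this
    have h1 : Multiset.card t ≤ Multiset.card B := Multiset.card_le_card htB
    rw [he] at h1
    simp only [Multiset.card_cons] at h1
    omega
  · have hT : (h₁ ::ₘ h₂ ::ₘ t₀ : Multiset G) ≤ u := by
      rw [he]
      exact Multiset.cons_le_cons _ (Multiset.cons_le_cons _ ht₀)
    have hTs : (h₁ ::ₘ h₂ ::ₘ t₀ : Multiset G).sum = 0 := by
      simp only [Multiset.sum_cons]
      have := hts
      simp only [Multiset.sum_cons] at this
      rw [← add_assoc]
      exact this
    have := hu.2.2 _ hT Multiset.cons_ne_zero hTs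
    rw [he] at this
    have h2 : t₀ = B := by
      have := (Multiset.cons_inj_right h₂).mp ((Multiset.cons_inj_right h₁).mp this)
      exact this
    rw [h2]

lemma fact_of_expand_card_le_two {X Y : Multiset G} {h₁ h₂ : G} (hX : IsAtomM X)
    (hXe : X = (h₁ + h₂) ::ₘ Y) {z : Multiset (Multiset G)}
    (hz : IsFactM (h₁ ::ₘ h₂ ::ₘ Y) z) : Multiset.card z ≤ 2 := by
  by_contra hcard
  push_neg at hcard
  have hsum := hz.2
  -- no nonempty zero-sum submultiset of Y
  have hnoY : ∀ R : Multiset G, R ≤ Y → R ≠ 0 → R.sum ≠ 0 := by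
    intro R hRY hR0 hRs
    have hRX : R ≤ X := by rw [hXe]; exact le_trans hRY (Multiset.le_cons_self _ _)
    have := hX.2.2 R hRX hR0 hRs
    subst this
    have := Multiset.card_le_card hRY
    rw [hXe] at this
    simp at this
  have hmem1 : h₁ ∈ z.sum := by rw [hsum]; exact Multiset.mem_cons_self _ _
  obtain ⟨P, hPz, hP1⟩ := exists_mem_part hmem1
  obtain ⟨z₁, rfl⟩ := Multiset.exists_cons_of_mem hPz
  by_cases hh2 : h₂ ∈ z₁.sum
  · obtain ⟨Q, hQz, hQ2⟩ := exists_mem_part hh2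
    obtain ⟨z₂, rfl⟩ := Multiset.exists_cons_of_mem hQz
    have hz₂ : z₂ ≠ 0 := by
      intro h
      rw [h] at hcard
      simp at hcard
    obtain ⟨R, hR⟩ := Multiset.exists_mem_of_ne_zero hz₂
    have hRS : R ≤ z₂.sum := le_sum_of_mem hR
    have hSY : z₂.sum ≤ Y := by
      rw [Multiset.le_iff_count]
      intro v
      have hc := congrArg (Multiset.count v) hsum
      simp only [Multiset.sum_cons, Multiset.count_add, Multiset.count_cons] at hc
      have hcP : (if v = h₁ then 1 else 0) ≤ Multiset.count v P := by
        split
        · next hv => subst hv; exact Multiset.one_le_count_iff_mem.mpr hP1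
        · omega
      have hcQ : (if v = h₂ then 1 else 0) ≤ Multiset.count v Q := by
        split
        · next hv => subst hv; exact Multiset.one_le_count_iff_mem.mpr hQ2
        · omega
      omega
    have hatom := hz.1 R (Multiset.mem_cons_of_mem (Multiset.mem_cons_of_mem hR))
    exact hnoY R (le_trans hRS hSY) hatom.1 hatom.2.1
  · -- both h₁ h₂ copies in P
    have hz₁ : z₁ ≠ 0 := by
      intro h
      rw [h] at hcard
      simp at hcard
    obtain ⟨R, hR⟩ := Multiset.exists_mem_of_ne_zero hz₁
    have hRS : R ≤ z₁.sum := le_sum_of_mem hR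
    have hSY : z₁.sum ≤ Y := by
      rw [Multiset.le_iff_count]
      intro v
      have hc := congrArg (Multiset.count v) hsum
      simp only [Multiset.sum_cons, Multiset.count_add, Multiset.count_cons] at hc
      by_cases hv2 : v = h₂
      · have h0 : Multiset.count v z₁.sum = 0 := by
          rw [hv2]; exact Multiset.count_eq_zero_of_notMem hh2
        omega
      · by_cases hv1 : v = h₁
        · have hP : 1 ≤ Multiset.count v P := by
            rw [hv1]; exact Multiset.one_le_count_iff_mem.mpr hP1
          simp only [if_pos hv1, if_neg hv2] at hc
          omega
        · simp only [if_neg hv1, if_neg hv2] at hc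
          omega
    have hatom := hz.1 R (Multiset.mem_cons_of_mem hR)
    exact hnoY R (le_trans hRS hSY) hatom.1 hatom.2.1

lemma contract_length {B : Multiset G} {h₁ h₂ : G} {z' : Multiset (Multiset G)}
    (hz' : IsFactM ((h₁ + h₂) ::ₘ B) z') :
    ∃ z, IsFactM (h₁ ::ₘ h₂ ::ₘ B) z ∧
      (Multiset.card z = Multiset.card z' ∨ Multiset.card z = Multiset.card z' + 1) := by
  have hmem : (h₁ + h₂) ∈ z'.sum := by rw [hz'.2]; exact Multiset.mem_cons_self _ _
  obtain ⟨P, hPz, hPm⟩ := exists_mem_part hmem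
  obtain ⟨w, rfl⟩ := Multiset.exists_cons_of_mem hPz
  obtain ⟨Y, rfl⟩ := Multiset.exists_cons_of_mem hPm
  have hPatom : IsAtomM ((h₁ + h₂) ::ₘ Y) := hz'.1 _ (Multiset.mem_cons_self _ _)
  have hX''sum : (h₁ ::ₘ h₂ ::ₘ Y : Multiset G).sum = 0 := by
    have := hPatom.2.1
    simp only [Multiset.sum_cons] at this ⊢
    rw [← add_assoc]
    exact this
  obtain ⟨z₀, hz₀⟩ := exists_fact _ _ rfl hX''sum
  have hz₀ne : z₀ ≠ 0 := by
    intro h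
    rw [h] at hz₀
    have := hz₀.2
    simp at this
  have hz₀card : 1 ≤ Multiset.card z₀ := Multiset.card_pos.mpr hz₀ne
  have hz₀card2 : Multiset.card z₀ ≤ 2 :=
    fact_of_expand_card_le_two hPatom rfl hz₀
  have hB : B = Y + w.sum := by
    have := hz'.2
    simp only [Multiset.sum_cons] at this
    rw [Multiset.cons_add] at this
    exact ((Multiset.cons_inj_right _).mp this).symm
  refine ⟨z₀ + w, ⟨?_, ?_⟩, ?_⟩
  · intro u hu
    rcases Multiset.mem_add.1 hu with h | h
    exacts [hz₀.1 u h, hz'.1 u (Multiset.mem_cons_of_mem h)]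
  · rw [Multiset.sum_add, hz₀.2, hB]
    simp [Multiset.cons_add]
  · simp only [Multiset.card_add, Multiset.card_cons]
    omega

lemma cover : ∀ (y : Multiset (Multiset G)) (s : Multiset G), s ≤ y.sum →
    ∃ y₁, y₁ ≤ y ∧ s ≤ y₁.sum ∧ Multiset.card y₁ ≤ Multiset.card s := by
  intro y
  induction y using Multiset.induction_on with
  | empty =>
    intro s hs
    simp only [Multiset.sum_zero, Multiset.le_zero] at hs
    exact ⟨0, le_refl _, by simp [hs], by simp⟩
  | cons P y₀ ih =>
    intro s hs
    rw [Multiset.sum_cons] at hs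
    set s₁ := s ∩ P with hs₁
    have hs₁s : s₁ ≤ s := Multiset.inter_le_left
    have hs₁P : s₁ ≤ P := Multiset.inter_le_right
    set s₂ := s - s₁ with hs₂
    have hsplit : s₁ + s₂ = s := add_tsub_cancel_of_le hs₁s
    have hs₂y : s₂ ≤ y₀.sum := by
      rw [Multiset.le_iff_count]
      intro a
      have h1 := Multiset.le_iff_count.mp hs a
      rw [Multiset.count_add] at h1
      have h2 : Multiset.count a s₁ = min (Multiset.count a s) (Multiset.count a P) :=
        Multiset.count_inter _ _ _
      have h3 : Multiset.count a s₂ = Multiset.count a s - Multiset.count a s₁ := by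
        rw [hs₂, Multiset.count_sub]
      omega
    obtain ⟨y₁', hy₁'le, hy₁'sum, hy₁'card⟩ := ih s₂ hs₂y
    by_cases h0 : s₁ = 0
    · refine ⟨y₁', le_trans hy₁'le (Multiset.le_cons_self _ _), ?_, ?_⟩
      · have : s₂ = s := by rw [hs₂, h0]; simp
        rwa [this] at hy₁'sum
      · have : Multiset.card s₂ ≤ Multiset.card s := Multiset.card_le_card (by rw [hs₂]; exact tsub_le_self)
        omega
    · refine ⟨P ::ₘ y₁', Multiset.cons_le_cons _ hy₁'le, ?_, ?_⟩
      · rw [Multiset.sum_cons, ← hsplit]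
        exact add_le_add hs₁P hy₁'sum
      · have hcs : Multiset.card s₁ + Multiset.card s₂ = Multiset.card s := by
          rw [← Multiset.card_add, hsplit]
        have h1 : 1 ≤ Multiset.card s₁ := Multiset.card_pos.mpr h0
        simp only [Multiset.card_cons]
        omega

variable [Fintype G]

lemma map_head? {α β : Type*} (f : α → β) (l : List α) :
    (l.map f).head? = l.head?.map f := by
  cases l <;> simp

lemma map_getLast?' {α β : Type*} (f : α → β) :
    ∀ l : List α, (l.map f).getLast? = l.getLast?.map f := by
  intro l
  induction l with
  | nil => simp
  | cons x t ih =>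
    cases t with
    | nil => simp
    | cons y s =>
      simp only [List.map_cons, List.getLast?_cons_cons] at *
      exact ih

lemma cross {N : ℕ} : ∀ (c : List ℕ) (k l : ℕ), (∀ x ∈ c, x ≤ k ∨ l ≤ x) →
    c.Chain' (fun u v => u ≤ v + N ∧ v ≤ u + N) → ∀ a b, c.head? = some a →
    c.getLast? = some b → a ≤ k → l ≤ b → l ≤ k + N := by
  intro c
  induction c with
  | nil => intro k l _ _ a b h; simp at h
  | cons x t ih =>
    intro k l hmem hchain a b hhead hlast hak hlb
    cases t with
    | nil =>
      simp only [List.head?_cons, Option.some_inj] at hhead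
      simp only [List.getLast?_singleton, Option.some_inj] at hlast
      omega
    | cons y s =>
      simp only [List.head?_cons, Option.some_inj] at hhead
      rcases hmem y (List.mem_cons_of_mem _ List.mem_cons_self) with hy | hy
      · refine ih k l (fun x hx => hmem x (List.mem_cons_of_mem _ hx)) hchain.tail y b rfl ?_ hy hlb
        rw [List.getLast?_cons_cons] at hlast
        exact hlast
      · have hrel := (List.isChain_cons_cons.mp hchain).1
        omega

lemma gap_exists : ∀ (n : ℕ) (L : Set ℕ) (a b : ℕ), b - a ≤ n → a ∈ L → b ∈ L → a < b →
    ∃ x y, x ∈ L ∧ y ∈ L ∧ x < y ∧ (∀ m, x < m → m < y → m ∉ L) := by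
  intro n
  induction n with
  | zero => intro L a b h _ _ hab; omega
  | succ n ih =>
    intro L a b h ha hb hab
    by_cases hm : ∃ m, m ∈ L ∧ a < m ∧ m < b
    · obtain ⟨m, hmL, ham, hmb⟩ := hm
      exact ih L m b (by omega) hmL hb hmb
    · push_neg at hm
      exact ⟨a, b, ha, hb, hab, fun m h1 h2 hmL => absurd (hm m hmL h1) (by omega)⟩

lemma card_sum_le_one {y : Multiset (Multiset G)} (h : ∀ P ∈ y, Multiset.card P ≤ 1) :
    Multiset.card y.sum ≤ Multiset.card y := by
  induction y using Multiset.induction_on with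
  | empty => simp
  | cons P w ih =>
    simp only [Multiset.sum_cons, Multiset.card_add, Multiset.card_cons]
    have h1 := h P (Multiset.mem_cons_self _ _)
    have h2 := ih (fun u hu => h u (Multiset.mem_cons_of_mem hu))
    omega

lemma cons_cancel₂ {a b : G} {s t : Multiset G} (h : a ::ₘ b ::ₘ s = a ::ₘ b ::ₘ t) :
    s = t :=
  (Multiset.cons_inj_right _).mp ((Multiset.cons_inj_right _).mp h)

lemma gap_down : ∀ (n : ℕ) (A : Multiset G), Multiset.card A = n →
    ∀ k l e, 1 ≤ e → k + e < l → k ∈ LSet A → l ∈ LSet A →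
    (∀ m, k < m → m < l → m ∉ LSet A) → e ∈ DeltaBG G := by
  intro n
  induction n using Nat.strong_induction_on with
  | _ n ih =>
    intro A hn k l e he hel hk hl hemp
    obtain ⟨z', hz', hcz'⟩ := hk
    obtain ⟨z, hz, hcz⟩ := hl
    have hA0 : A.sum = 0 := fact_sum_eq_zero hz'
    -- find a part of the short factorization with card ≥ 2
    have hbig : ∃ U ∈ z', 2 ≤ Multiset.card U := by
      by_contra hs
      push_neg at hs
      have h1 : Multiset.card A ≤ Multiset.card z' := by
        rw [← hz'.2]
        exact card_sum_le_one (fun P hP => by have := hs P hP; omega)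
      have h2 : Multiset.card z ≤ Multiset.card A := by
        rw [← hz.2]
        exact card_le_card_sum (fun u hu => (hz.1 u hu).1)
      omega
    obtain ⟨U, hUz', hU2⟩ := hbig
    obtain ⟨w', rfl⟩ := Multiset.exists_cons_of_mem hUz'
    have hUatom : IsAtomM U := hz'.1 _ (Multiset.mem_cons_self _ _)
    -- decompose U = h₁ ::ₘ h₂ ::ₘ U₀
    obtain ⟨h₁, hh₁⟩ := Multiset.exists_mem_of_ne_zero hUatom.1
    obtain ⟨U₁, hU1⟩ := Multiset.exists_cons_of_mem hh₁
    have hU₁ne : U₁ ≠ 0 := by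
      intro h
      rw [hU1, h] at hU2
      simp at hU2
    obtain ⟨h₂, hh₂⟩ := Multiset.exists_mem_of_ne_zero hU₁ne
    obtain ⟨U₀, hU0⟩ := Multiset.exists_cons_of_mem hh₂
    have hUeq : U = h₁ ::ₘ h₂ ::ₘ U₀ := by rw [hU1, hU0]
    set B : Multiset G := U₀ + w'.sum with hBdef
    have hAeq : A = h₁ ::ₘ h₂ ::ₘ B := by
      rw [← hz'.2, Multiset.sum_cons, hUeq, hBdef]
      simp [Multiset.cons_add]
    set A' : Multiset G := (h₁ + h₂) ::ₘ B with hA'def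
    have hA'0 : A'.sum = 0 := by
      rw [hA'def]
      have h1 := hA0
      rw [hAeq] at h1
      simp only [Multiset.sum_cons] at h1 ⊢
      rw [add_assoc]
      exact h1
    have hcardA : Multiset.card A = Multiset.card A' + 1 := by
      rw [hAeq, hA'def]
      simp
    -- k ∈ LSet A'
    have hk' : k ∈ LSet A' := by
      refine ⟨((h₁ + h₂) ::ₘ U₀) ::ₘ w', ⟨?_, ?_⟩, ?_⟩
      · intro u hu
        rcases Multiset.mem_cons.1 hu with h | h
        · rw [h]; exact atom_contract hUatom hUeq
        · exact hz'.1 u (Multiset.mem_cons_of_mem h)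
      · rw [Multiset.sum_cons, hA'def, hBdef, Multiset.cons_add]
      · rw [← hcz']
        simp
    -- emptiness window for A'
    have hemp' : ∀ m, k < m → m + 1 < l → m ∉ LSet A' := by
      intro m h1 h2 hm
      obtain ⟨zm, hzm, hczm⟩ := hm
      rw [hA'def] at hzm
      obtain ⟨zz, hzz, hczz⟩ := contract_length hzm
      rw [← hAeq] at hzz
      have hzzL : Multiset.card zz ∈ LSet A := ⟨zz, hzz, rfl⟩
      rcases hczz with h | h <;> rw [hczm] at h <;>
        exact hemp _ (by omega) (by omega) hzzL
    -- some length of A' above k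
    have habove : ∃ x, x ∈ LSet A' ∧ k < x := by
      have hh₁A : h₁ ∈ z.sum := by
        rw [hz.2, hAeq]
        exact Multiset.mem_cons_self _ _
      obtain ⟨P, hPz, hPh₁⟩ := exists_mem_part hh₁A
      obtain ⟨v, rfl⟩ := Multiset.exists_cons_of_mem hPz
      obtain ⟨P₀, hP0⟩ := Multiset.exists_cons_of_mem hPh₁
      have hPatom : IsAtomM P := hz.1 _ (Multiset.mem_cons_self _ _)
      have hAPv : A = P + v.sum := by rw [← hz.2, Multiset.sum_cons]
      by_cases hc : h₂ ∈ v.sum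
      · -- h₂ in another part
        obtain ⟨Q, hQv, hQh₂⟩ := exists_mem_part hc
        obtain ⟨v₀, rfl⟩ := Multiset.exists_cons_of_mem hQv
        obtain ⟨Q₀, hQ0⟩ := Multiset.exists_cons_of_mem hQh₂
        have hQatom : IsAtomM Q := hz.1 _ (Multiset.mem_cons_of_mem (Multiset.mem_cons_self _ _))
        set M : Multiset G := (h₁ + h₂) ::ₘ (P₀ + Q₀) with hMdef
        have hMsum : M.sum = 0 := by
          rw [hMdef]
          have e1 := hPatom.2.1
          have e2 := hQatom.2.1
          rw [hP0] at e1
          rw [hQ0] at e2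
          simp only [Multiset.sum_cons, Multiset.sum_add] at e1 e2 ⊢
          have : h₁ + h₂ + (P₀.sum + Q₀.sum) = (h₁ + P₀.sum) + (h₂ + Q₀.sum) := by abel
          rw [this, e1, e2, add_zero]
        obtain ⟨z₀, hz₀⟩ := exists_fact _ M rfl hMsum
        have hz₀ne : z₀ ≠ 0 := by
          intro h
          rw [h] at hz₀
          have := hz₀.2
          simp only [Multiset.sum_zero] at this
          rw [hMdef] at this
          exact Multiset.cons_ne_zero this.symm
        have hBeq : B = P₀ + Q₀ + v₀.sum := by
          apply cons_cancel₂ (a := h₁) (b := h₂)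
          rw [← hAeq, hAPv, hP0, hQ0]
          ext x
          simp only [Multiset.sum_cons, Multiset.count_cons, Multiset.count_add]
          split_ifs <;> omega
        refine ⟨Multiset.card z₀ + Multiset.card v₀, ⟨z₀ + v₀, ⟨?_, ?_⟩, by simp⟩, ?_⟩
        · intro u hu
          rcases Multiset.mem_add.1 hu with h | h
          · exact hz₀.1 u h
          · exact hz.1 u (Multiset.mem_cons_of_mem (Multiset.mem_cons_of_mem h))
        · rw [Multiset.sum_add, hz₀.2, hMdef, hA'def, hBeq]
          ext x
          simp only [Multiset.sum_cons, Multiset.count_cons, Multiset.count_add]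
          split_ifs <;> omega
        · have hcv : Multiset.card (P ::ₘ (Q ::ₘ v₀)) = l := hcz
          simp only [Multiset.card_cons] at hcv
          have : 1 ≤ Multiset.card z₀ := Multiset.card_pos.mpr hz₀ne
          omega
      · -- both h₁ h₂ in P
        have hcnt : Multiset.count h₂ P₀ ≥ 1 := by
          have hAc := congrArg (Multiset.count h₂) hAPv
          rw [hAeq] at hAc
          have hvz : Multiset.count h₂ v.sum = 0 := Multiset.count_eq_zero_of_notMem hc
          rw [hP0] at hAc
          simp only [Multiset.count_cons, Multiset.count_add, hvz] at hAc
          split_ifs at hAc <;> omega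
        obtain ⟨P₀', hP0'⟩ := Multiset.exists_cons_of_mem (Multiset.one_le_count_iff_mem.mp hcnt)
        have hPeq : P = h₁ ::ₘ h₂ ::ₘ P₀' := by rw [hP0, hP0']
        have hBeq : B = P₀' + v.sum := by
          apply cons_cancel₂ (a := h₁) (b := h₂)
          rw [← hAeq, hAPv, hPeq]
          simp [Multiset.cons_add]
        refine ⟨Multiset.card v + 1, ⟨((h₁ + h₂) ::ₘ P₀') ::ₘ v, ⟨?_, ?_⟩, by simp⟩, ?_⟩
        · intro u hu
          rcases Multiset.mem_cons.1 hu with h | h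
          · rw [h]; exact atom_contract hPatom hPeq
          · exact hz.1 u (Multiset.mem_cons_of_mem h)
        · rw [Multiset.sum_cons, hA'def, hBeq, Multiset.cons_add]
        · have hcv : Multiset.card (P ::ₘ v) = l := hcz
          simp only [Multiset.card_cons] at hcv
          omega
    -- take the minimal length above k
    set S : Set ℕ := {x | x ∈ LSet A' ∧ k < x} with hSdef
    have hSne : S.Nonempty := habove
    set L2 : ℕ := sInf S with hL2
    have hL2mem : L2 ∈ S := Nat.sInf_mem hSne
    have hL2min : ∀ m ∈ S, L2 ≤ m := fun m hm => Nat.sInf_le hm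
    have hemp'' : ∀ m, k < m → m < L2 → m ∉ LSet A' := by
      intro m h1 h2 hm
      have : L2 ≤ m := hL2min m ⟨hm, h1⟩
      omega
    have hLlow : l ≤ L2 + 1 := by
      by_contra hcon
      push_neg at hcon
      exact hemp' L2 hL2mem.2 (by omega) hL2mem.1
    by_cases hce : k + e = L2
    · exact ⟨A', hA'0, k, L2, hk', hL2mem.1, hL2mem.2, hemp'', by omega⟩
    · have hlt : k + e < L2 := by omega
      exact ih (Multiset.card A') (by omega) A' rfl k L2 e he hlt hk' hL2mem.1 hemp''

lemma le_zero_cases {t : Multiset G} (h : t ≤ 0) : t = 0 := Multiset.le_zero.mp h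

lemma pair_atom {a b : G} (hab : a + b = 0) (ha : a ≠ 0) (hb : b ≠ 0) :
    IsAtomM (a ::ₘ b ::ₘ 0) := by
  refine ⟨Multiset.cons_ne_zero, by simpa using hab, ?_⟩
  intro t ht ht0 hts
  rcases cons_le_cases ht with h | ⟨t₀, rfl, ht₀⟩
  · rcases cons_le_cases h with h' | ⟨t₁, rfl, ht₁⟩
    · exact absurd (le_zero_cases h') ht0
    · rw [le_zero_cases ht₁] at hts ⊢
      simp at hts
      exact absurd hts hb
  · rcases cons_le_cases ht₀ with h' | ⟨t₁, rfl, ht₁⟩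
    · rw [le_zero_cases h'] at hts ⊢
      simp at hts
      exact absurd hts ha
    · rw [le_zero_cases ht₁]

lemma triple_atom {a b c : G} (habc : a + b + c = 0) (ha : a ≠ 0) (hb : b ≠ 0) (hc : c ≠ 0)
    (hab : a + b ≠ 0) (hac : a + c ≠ 0) (hbc : b + c ≠ 0) :
    IsAtomM (a ::ₘ b ::ₘ c ::ₘ 0) := by
  refine ⟨Multiset.cons_ne_zero, by simpa [add_assoc] using habc, ?_⟩
  intro t ht ht0 hts
  rcases cons_le_cases ht with h | ⟨t₀, rfl, ht₀⟩
  · -- t ≤ b ::ₘ c ::ₘ 0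
    exfalso
    rcases cons_le_cases h with h' | ⟨t₁, rfl, ht₁⟩
    · rcases cons_le_cases h' with h'' | ⟨t₂, rfl, ht₂⟩
      · exact ht0 (le_zero_cases h'')
      · rw [le_zero_cases ht₂] at hts
        simp at hts
        exact hc hts
    · rcases cons_le_cases ht₁ with h'' | ⟨t₂, rfl, ht₂⟩
      · rw [le_zero_cases h''] at hts
        simp at hts
        exact hb hts
      · rw [le_zero_cases ht₂] at hts
        simp at hts
        exact hbc hts
  · rcases cons_le_cases ht₀ with h' | ⟨t₁, rfl, ht₁⟩
    · exfalso
      rcases cons_le_cases h' with h'' | ⟨t₂, rfl, ht₂⟩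
      · rw [le_zero_cases h''] at hts
        simp at hts
        exact ha hts
      · rw [le_zero_cases ht₂] at hts
        simp at hts
        exact hac hts
    · rcases cons_le_cases ht₁ with h'' | ⟨t₂, rfl, ht₂⟩
      · exfalso
        rw [le_zero_cases h''] at hts
        simp at hts
        exact hab hts
      · rw [le_zero_cases ht₂]

variable [Fintype G]

lemma mem_block_iff (x : FreeCM G) :
    x ∈ BlockMonoid G ↔ (Multiplicative.toAdd x).sum = 0 := by
  rw [BlockMonoid, MonoidHom.mem_mker]
  constructor
  · intro h
    have : Multiplicative.toAdd (sigmaHom G x) = 0 := by rw [h]; rfl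
    exact this
  · intro h
    have : sigmaHom G x = Multiplicative.ofAdd 0 := by
      show Multiplicative.ofAdd ((Multiplicative.toAdd x).sum) = _
      rw [h]
    simpa using this

abbrev BM (G : Type*) [AddCommGroup G] := ↥(BlockMonoid G)

lemma units_triv (u : (BM G)ˣ) : u = 1 := by
  have h0 : (u : BM G) * (u⁻¹ : (BM G)ˣ) = 1 := u.mul_inv
  have h1 : ((u : BM G) : FreeCM G) * ((u⁻¹ : (BM G)ˣ) : BM G) = 1 := by
    rw [← Submonoid.coe_mul, h0]; rfl
  have h2 : Multiplicative.toAdd (((u : BM G) : FreeCM G)) +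
      Multiplicative.toAdd (((u⁻¹ : (BM G)ˣ) : BM G) : FreeCM G) = 0 := by
    have := congrArg Multiplicative.toAdd h1
    simpa using this
  have h3 : Multiset.card (Multiplicative.toAdd (((u : BM G) : FreeCM G))) = 0 := by
    have := congrArg Multiset.card h2
    simp only [Multiset.card_add, Multiset.card_zero] at this
    omega
  have h4 : Multiplicative.toAdd (((u : BM G) : FreeCM G)) = 0 := Multiset.card_eq_zero.mp h3
  have h5 : ((u : BM G) : FreeCM G) = 1 := by
    have := congrArg Multiplicative.ofAdd h4
    simpa using this
  apply Units.ext; apply Subtype.ext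
  exact congrArg Subtype.val (show (u : BM G) = 1 from Subtype.ext h5)

instance subsingletonUnitsBM : Subsingleton ((BM G)ˣ) :=
  ⟨fun a b => by rw [units_triv a, units_triv b]⟩

lemma isUnit_iff_one {b : BM G} : IsUnit b ↔ b = 1 := by
  constructor
  · rintro ⟨v, rfl⟩
    rw [units_triv v]; rfl
  · rintro rfl
    exact isUnit_one

lemma toAdd_mem {b : BM G} : (Multiplicative.toAdd ((b : FreeCM G))).sum = 0 :=
  (mem_block_iff _).mp b.2

def mkB (u : Multiset G) (h : u.sum = 0) : BM G :=
  ⟨Multiplicative.ofAdd u, (mem_block_iff _).mpr (by simpa using h)⟩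

lemma irreducible_iff_atom (b : BM G) :
    Irreducible b ↔ IsAtomM (Multiplicative.toAdd ((b : FreeCM G))) := by
  set s := Multiplicative.toAdd ((b : FreeCM G)) with hsdef
  have hs0 : s.sum = 0 := toAdd_mem
  constructor
  · rintro ⟨hnu, hsplit⟩
    refine ⟨?_, hs0, ?_⟩
    · intro h
      apply hnu
      rw [isUnit_iff_one]
      apply Subtype.ext
      have : (b : FreeCM G) = Multiplicative.ofAdd 0 := by
        rw [← h, hsdef]; rfl
      simpa using this
    · intro t ht ht0 hts
      have hrest : (s - t).sum = 0 := by
        have h1 : t + (s - t) = s := add_tsub_cancel_of_le ht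
        have := congrArg Multiset.sum h1
        rw [Multiset.sum_add, hts, hs0] at this
        simpa using this
      have hbeq : b = mkB t hts * mkB (s - t) hrest := by
        apply Subtype.ext
        rw [Submonoid.coe_mul]
        show (b : FreeCM G) = Multiplicative.ofAdd t * Multiplicative.ofAdd (s - t)
        rw [← ofAdd_add, add_tsub_cancel_of_le ht]
        rw [hsdef]
        simp
      rcases hsplit hbeq with h | h
      · exfalso
        rw [isUnit_iff_one] at h
        have := congrArg (fun x : BM G => Multiplicative.toAdd ((x : FreeCM G))) h
        simp only [mkB] at this
        apply ht0
        simpa using this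
      · rw [isUnit_iff_one] at h
        have := congrArg (fun x : BM G => Multiplicative.toAdd ((x : FreeCM G))) h
        simp only [mkB] at this
        have h2 : s - t = 0 := by simpa using this
        have h3 : s ≤ t := tsub_eq_zero_iff_le.mp h2
        exact le_antisymm ht h3
  · rintro ⟨hne, -, hmin⟩
    constructor
    · rw [isUnit_iff_one]
      intro h
      apply hne
      rw [hsdef, h]
      rfl
    · intro x y hxy
      set tx := Multiplicative.toAdd ((x : FreeCM G)) with htx
      set ty := Multiplicative.toAdd ((y : FreeCM G)) with hty
      have hsum : s = tx + ty := by
        rw [hsdef, hxy]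
        rw [Submonoid.coe_mul]
        rfl
      by_cases h0 : tx = 0
      · left
        rw [isUnit_iff_one]
        apply Subtype.ext
        have : (x : FreeCM G) = Multiplicative.ofAdd 0 := by rw [← h0, htx]; rfl
        simpa using this
      · have htxle : tx ≤ s := by rw [hsum]; exact self_le_add_right _ _
        have htxs : tx.sum = 0 := toAdd_mem
        have htxeq := hmin tx htxle h0 htxs
        -- tx = s, so ty = 0
        right
        rw [isUnit_iff_one]
        apply Subtype.ext
        rw [htxeq] at hsum
        have hty0 : ty = 0 := by
          have h1 : s + 0 = s + ty := by rw [add_zero]; exact hsum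
          exact (add_left_cancel h1).symm
        have : (y : FreeCM G) = Multiplicative.ofAdd 0 := by rw [← hty0, hty]; rfl
        simpa using this

lemma irr_mk_iff (b : BM G) : Irreducible (Associates.mk b) ↔ Irreducible b := by
  constructor
  · rintro ⟨hnu, hsplit⟩
    constructor
    · intro h
      exact hnu (by rwa [Associates.isUnit_mk])
    · intro x y hxy
      have := @hsplit (Associates.mk x) (Associates.mk y)
        (by rw [Associates.mk_mul_mk, hxy])
      rwa [Associates.isUnit_mk, Associates.isUnit_mk] at this
  · rintro ⟨hnu, hsplit⟩
    constructor
    · intro h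
      exact hnu (by rwa [Associates.isUnit_mk] at h)
    · intro u v huv
      obtain ⟨x, rfl⟩ := Associates.mk_surjective u
      obtain ⟨y, rfl⟩ := Associates.mk_surjective v
      rw [Associates.mk_mul_mk] at huv
      have := hsplit (Associates.mk_injective huv)
      rwa [Associates.isUnit_mk, Associates.isUnit_mk]

lemma mk_lift (z : Multiset (Associates (BM G))) :
    ∃ w : Multiset (BM G), w.map Associates.mk = z := by
  induction z using Multiset.induction_on with
  | empty => exact ⟨0, rfl⟩
  | cons x t ih =>
    obtain ⟨w, hw⟩ := ih
    obtain ⟨b, hb⟩ := Associates.mk_surjective x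
    exact ⟨b ::ₘ w, by rw [Multiset.map_cons, hw, hb]⟩

lemma sum_map_toAdd (w : Multiset (BM G)) :
    (w.map (fun b : BM G => Multiplicative.toAdd ((b : FreeCM G)))).sum
      = Multiplicative.toAdd ((w.prod : FreeCM G)) := by
  induction w using Multiset.induction_on with
  | empty => simp
  | cons b t ih =>
    simp only [Multiset.map_cons, Multiset.sum_cons, Multiset.prod_cons, ih,
      Submonoid.coe_mul]
    rfl

lemma prod_map_mkB (v : Multiset (Multiset G)) (h : ∀ u ∈ v, u.sum = 0) (hv : v.sum.sum = 0) :
    (v.map (fun u => if h : u.sum = 0 then Associates.mk (mkB u h) else 1)).prod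
      = Associates.mk (mkB v.sum hv) := by
  induction v using Multiset.induction_on with
  | empty =>
    simp only [Multiset.map_zero, Multiset.prod_zero, Multiset.sum_zero]
    rw [show mkB (0 : Multiset G) hv = 1 from rfl, Associates.mk_one]
  | cons u t ih =>
    have hu : u.sum = 0 := h u (Multiset.mem_cons_self _ _)
    have hts : t.sum.sum = 0 := by
      have := hv
      rw [Multiset.sum_cons, Multiset.sum_add, hu] at this
      simpa using this
    simp only [Multiset.map_cons, Multiset.prod_cons, dif_pos hu,
      ih (fun x hx => h x (Multiset.mem_cons_of_mem hx)) hts]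
    rw [Associates.mk_mul_mk]
    congr 1
    apply Subtype.ext
    rw [Submonoid.coe_mul]
    show Multiplicative.ofAdd u * Multiplicative.ofAdd t.sum = Multiplicative.ofAdd ((u ::ₘ t).sum)
    rw [← ofAdd_add, Multiset.sum_cons]

lemma lengthSet_eq (a : BM G) :
    lengthSet a = LSet (Multiplicative.toAdd ((a : FreeCM G))) := by
  ext k
  constructor
  · rintro ⟨z, ⟨hirr, hprod⟩, hcard⟩
    obtain ⟨w, rfl⟩ := mk_lift z
    have hweq : w.prod = a := by
      have h1 : Multiset.map (⇑Associates.mkMonoidHom) w = Multiset.map Associates.mk w :=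
        Multiset.map_congr rfl (fun x _ => Associates.mkMonoidHom_apply x)
      have h2 := Multiset.prod_hom w Associates.mkMonoidHom
      rw [h1, Associates.mkMonoidHom_apply] at h2
      rw [h2] at hprod
      exact Associates.mk_injective hprod
    refine ⟨w.map (fun b : BM G => Multiplicative.toAdd ((b : FreeCM G))), ⟨?_, ?_⟩, ?_⟩
    · intro u hu
      obtain ⟨b, hb, rfl⟩ := Multiset.mem_map.1 hu
      have : Irreducible (Associates.mk b) := hirr _ (Multiset.mem_map_of_mem _ hb)
      rw [irr_mk_iff] at this
      exact (irreducible_iff_atom b).mp this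
    · rw [sum_map_toAdd, hweq]
    · rw [Multiset.card_map, ← Multiset.card_map Associates.mk w, hcard]
  · rintro ⟨v, ⟨hatoms, hsum⟩, hcard⟩
    have hzsums : ∀ u ∈ v, (u : Multiset G).sum = 0 := fun u hu => (hatoms u hu).2.1
    have hvs : v.sum.sum = 0 := by rw [hsum]; exact toAdd_mem
    refine ⟨v.map (fun u => if h : u.sum = 0 then Associates.mk (mkB u h) else 1), ⟨?_, ?_⟩, ?_⟩
    · intro x hx
      obtain ⟨u, hu, rfl⟩ := Multiset.mem_map.1 hx
      rw [dif_pos (hzsums u hu)]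
      rw [irr_mk_iff, irreducible_iff_atom]
      have : Multiplicative.toAdd ((mkB u (hzsums u hu) : FreeCM G)) = u := rfl
      rw [this]
      exact hatoms u hu
    · rw [prod_map_mkB v hzsums hvs]
      congr 1
      apply Subtype.ext
      show Multiplicative.ofAdd v.sum = (a : FreeCM G)
      rw [hsum]
      simp
    · rw [Multiset.card_map, hcard]

lemma deltaMonoid_eq : DeltaMonoid (BM G) = DeltaBG G := by
  ext d
  simp only [DeltaMonoid, Set.mem_iUnion]
  constructor
  · rintro ⟨a, hd⟩
    exact ⟨Multiplicative.toAdd ((a : FreeCM G)), toAdd_mem, by rwa [← lengthSet_eq]⟩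
  · rintro ⟨A, hA0, hd⟩
    refine ⟨mkB A hA0, ?_⟩
    rw [lengthSet_eq]
    exact hd

variable [Fintype G]

lemma atom_card_le {u : Multiset G} (hu : IsAtomM u) :
    Multiset.card u ≤ Fintype.card G := by
  by_contra hlt
  push_neg at hlt
  set l := u.toList with hl
  have hlen : l.length = Multiset.card u := by
    rw [hl, ← Multiset.coe_card, Multiset.coe_toList]
  have key : ∀ i j : ℕ, i < j → j < l.length →
      (l.take (i+1)).sum = (l.take (j+1)).sum → False := by
    intro i j hij hjlen heq
    set t := (l.drop (i+1)).take (j - i) with htdef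
    have htake : l.take (j+1) = l.take (i+1) ++ t := by
      rw [htdef, ← List.take_add]
      congr 1
      omega
    have hsumt : t.sum = 0 := by
      have := heq
      rw [htake, List.sum_append] at this
      have h0 := add_left_cancel (a := (l.take (i+1)).sum) (b := (0:G)) (c := t.sum)
        (by rw [add_zero]; exact this)
      exact h0.symm
    have hsub : List.Sublist t l := List.Sublist.trans (List.take_sublist _ _) (List.drop_sublist _ _)
    have hle : (↑t : Multiset G) ≤ u := by
      have := Multiset.coe_le.mpr hsub.subperm
      rwa [Multiset.coe_toList] at this
    have hlent : t.length = j - i := by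
      rw [htdef, List.length_take, List.length_drop]
      omega
    have htne : (↑t : Multiset G) ≠ 0 := by
      rw [Ne, Multiset.coe_eq_zero, ← List.length_eq_zero_iff]
      omega
    have := hu.2.2 _ hle htne (by rwa [Multiset.sum_coe])
    have hcard := congrArg Multiset.card this
    rw [Multiset.coe_card, hlent] at hcard
    omega
  obtain ⟨a, b, hab, hfab⟩ := Fintype.exists_ne_map_eq_of_card_lt
    (fun i : Fin l.length => (l.take (i.1+1)).sum) (by rw [Fintype.card_fin]; omega)
  have habne : a.1 ≠ b.1 := fun h => hab (Fin.ext h)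
  rcases lt_or_gt_of_ne habne with h | h
  · exact key a.1 b.1 h b.2 hfab
  · exact key b.1 a.1 h a.2 hfab.symm

lemma sum_card_le {y : Multiset (Multiset G)} (h : ∀ P ∈ y, IsAtomM P) :
    Multiset.card y.sum ≤ Multiset.card y * Fintype.card G := by
  induction y using Multiset.induction_on with
  | empty => simp
  | cons P w ih =>
    simp only [Multiset.sum_cons, Multiset.card_add, Multiset.card_cons]
    have h1 : Multiset.card P ≤ Fintype.card G := atom_card_le (h P (Multiset.mem_cons_self _ _))
    have h2 := ih (fun u hu => h u (Multiset.mem_cons_of_mem hu))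
    have : (Multiset.card w + 1) * Fintype.card G = Multiset.card w * Fintype.card G + Fintype.card G := by ring
    omega

def NN (G : Type*) [AddCommGroup G] [Fintype G] : ℕ := Fintype.card G * Fintype.card G + 1

lemma exists_chain : ∀ n (A : Multiset G) (z z' : Multiset (Multiset G)),
    Multiset.card A = n → IsFactM A z → IsFactM A z' →
    ∃ c : List (Multiset (Multiset G)), c.head? = some z' ∧ c.getLast? = some z ∧
      (∀ w ∈ c, IsFactM A w) ∧
      c.Chain' (fun u v => Multiset.card u ≤ Multiset.card v + NN G ∧
        Multiset.card v ≤ Multiset.card u + NN G) := by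
  intro n
  induction n using Nat.strong_induction_on with
  | _ n ih =>
    intro A z z' hn hz hz'
    by_cases hz0 : z = 0
    · have hA : A = 0 := by rw [← hz.2, hz0]; simp
      have hz'0 : z' = 0 := by
        have h1 := card_le_card_sum (fun u hu => (hz'.1 u hu).1)
        rw [hz'.2, hA] at h1
        simp only [Multiset.card_zero, Nat.le_zero, Multiset.card_eq_zero] at h1
        exact h1
      refine ⟨[z], by simp [hz'0, hz0], rfl, ?_, ?_⟩
      · intro w hw
        rw [List.mem_singleton] at hw
        rw [hw]
        exact hz
      · exact List.isChain_singleton _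
    · obtain ⟨U₁, hU₁z⟩ := Multiset.exists_mem_of_ne_zero hz0
      obtain ⟨z₀, rfl⟩ := Multiset.exists_cons_of_mem hU₁z
      have hU₁atom : IsAtomM U₁ := hz.1 _ (Multiset.mem_cons_self _ _)
      have hU₁card : 1 ≤ Multiset.card U₁ := Multiset.card_pos.mpr hU₁atom.1
      -- construct z'' = U₁ ::ₘ z₁ with controlled jump from z'
      have main : ∃ z₁ : Multiset (Multiset G), IsFactM A (U₁ ::ₘ z₁) ∧
          Multiset.card (U₁ ::ₘ z₁) ≤ Multiset.card z' + NN G ∧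
          Multiset.card z' ≤ Multiset.card (U₁ ::ₘ z₁) + NN G := by
        by_cases hUz' : U₁ ∈ z'
        · obtain ⟨z₁, rfl⟩ := Multiset.exists_cons_of_mem hUz'
          exact ⟨z₁, hz', by simp only [NN]; omega, by simp only [NN]; omega⟩
        · have hU₁A : U₁ ≤ z'.sum := by
            rw [hz'.2, ← hz.2, Multiset.sum_cons]
            exact self_le_add_right _ _
          obtain ⟨y₁, hy₁le, hy₁sum, hy₁card⟩ := cover z' U₁ hU₁A
          have hy₁atoms : ∀ P ∈ y₁, IsAtomM P := fun P hP => hz'.1 P (Multiset.mem_of_le hy₁le hP)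
          set C := y₁.sum - U₁ with hC
          have hCU : U₁ + C = y₁.sum := by
            rw [hC, add_tsub_cancel_of_le hy₁sum]
          have hCsum : C.sum = 0 := by
            have h1 : U₁.sum + C.sum = (y₁.sum).sum := by rw [← Multiset.sum_add, hCU]
            rw [hU₁atom.2.1, sum_sum_eq_zero hy₁atoms] at h1
            simpa using h1
          obtain ⟨zC, hzC⟩ := exists_fact _ C rfl hCsum
          have htcard : Multiset.card zC ≤ Fintype.card G * Fintype.card G := by
            have h1 : Multiset.card zC ≤ Multiset.card C := by
              have := card_le_card_sum (fun u hu => (hzC.1 u hu).1)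
              rwa [hzC.2] at this
            have h2 : Multiset.card U₁ + Multiset.card C = Multiset.card y₁.sum := by
              rw [← Multiset.card_add, hCU]
            have h3 := sum_card_le hy₁atoms
            have h4 : Multiset.card U₁ ≤ Fintype.card G := atom_card_le hU₁atom
            have h5 : Multiset.card y₁ ≤ Multiset.card U₁ := hy₁card
            have h6 : Multiset.card y₁ * Fintype.card G ≤ Fintype.card G * Fintype.card G :=
              Nat.mul_le_mul_right _ (le_trans h5 h4)
            omega
          refine ⟨zC + (z' - y₁), ⟨?_, ?_⟩, ?_, ?_⟩
          · intro u hu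
            rcases Multiset.mem_cons.1 hu with h | h
            · rw [h]; exact hU₁atom
            · rcases Multiset.mem_add.1 h with h | h
              · exact hzC.1 u h
              · exact hz'.1 u (Multiset.mem_of_le tsub_le_self h)
          · rw [Multiset.sum_cons, Multiset.sum_add, hzC.2]
            have hsplit : y₁ + (z' - y₁) = z' := add_tsub_cancel_of_le hy₁le
            have : y₁.sum + (z' - y₁).sum = A := by
              rw [← Multiset.sum_add, hsplit, hz'.2]
            rw [← add_assoc, hCU]
            exact this
          all_goals
            have hsplitc : Multiset.card y₁ + Multiset.card (z' - y₁) = Multiset.card z' := by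
              rw [← Multiset.card_add, add_tsub_cancel_of_le hy₁le]
          all_goals
            have h4 : Multiset.card U₁ ≤ Fintype.card G := atom_card_le hU₁atom
          all_goals
            have h5 : Multiset.card y₁ ≤ Multiset.card U₁ := hy₁card
          all_goals
            have hg1 : Fintype.card G ≤ Fintype.card G * Fintype.card G :=
              Nat.le_mul_of_pos_left _ Fintype.card_pos
          all_goals
            simp only [Multiset.card_cons, Multiset.card_add, NN]
            omega
      obtain ⟨z₁, hz₁fact, hjump1, hjump2⟩ := main
      -- recurse on A - U₁ = z₀.sum
      have hA : A = U₁ + z₀.sum := by rw [← hz.2, Multiset.sum_cons]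
      have hz₁sum : z₁.sum = z₀.sum := by
        have h1 : U₁ + z₁.sum = A := by rw [← hz₁fact.2, Multiset.sum_cons]
        rw [hA] at h1
        exact add_left_cancel h1
      have hfz₀ : IsFactM z₀.sum z₀ := ⟨fun u hu => hz.1 u (Multiset.mem_cons_of_mem hu), rfl⟩
      have hfz₁ : IsFactM z₀.sum z₁ := ⟨fun u hu => hz₁fact.1 u (Multiset.mem_cons_of_mem hu), hz₁sum⟩
      have hcardlt : Multiset.card z₀.sum < n := by
        have := congrArg Multiset.card hA
        simp only [Multiset.card_add] at this
        omega
      obtain ⟨c₀, hhead, hlast, hmem, hchain⟩ := ih _ hcardlt z₀.sum z₀ z₁ rfl hfz₀ hfz₁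
      have hc₀ne : c₀ ≠ [] := by
        intro h
        rw [h] at hhead
        simp at hhead
      refine ⟨z' :: c₀.map (fun w => U₁ ::ₘ w), rfl, ?_, ?_, ?_⟩
      · -- getLast?
        have hstep : (z' :: c₀.map (fun w => U₁ ::ₘ w)).getLast? = (c₀.map (fun w => U₁ ::ₘ w)).getLast? := by
          cases hc : c₀ with
          | nil => exact absurd hc hc₀ne
          | cons y s => simp [hc, List.getLast?_cons_cons]
        rw [hstep, map_getLast?' (fun w => U₁ ::ₘ w) c₀, hlast]
        rfl
      · intro w hw
        rcases List.mem_cons.1 hw with h | h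
        · rw [h]; exact hz'
        · obtain ⟨v, hv, rfl⟩ := List.mem_map.1 h
          have hfv := hmem v hv
          exact ⟨fun u hu => by
            rcases Multiset.mem_cons.1 hu with h | h
            · rw [h]; exact hU₁atom
            · exact hfv.1 u h,
            by rw [Multiset.sum_cons, hfv.2, hA]⟩
      · unfold List.Chain'; rw [List.isChain_cons]
        constructor
        · intro y hy
          rcases c₀ with _ | ⟨c₀h, c₀t⟩
          · simp at hc₀ne
          · simp only [List.map_cons, List.head?_cons, Option.mem_some_iff] at hy
            have : c₀h = z₁ := by
              simp only [List.head?_cons, Option.some_inj] at hhead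
              exact hhead
            rw [← hy, this]
            exact ⟨hjump2, hjump1⟩
        · rw [List.isChain_map]
          apply hchain.imp
          intro a b hab
          simp only [Multiset.card_cons]
          omega

lemma adjacent_gap_le [Fintype G] {A : Multiset G} {k l : ℕ}
    (hk : k ∈ LSet A) (hl : l ∈ LSet A) (hkl : k < l)
    (hemp : ∀ m, k < m → m < l → m ∉ LSet A) : l ≤ k + NN G := by
  obtain ⟨z', hz', hcz'⟩ := hk
  obtain ⟨z, hz, hcz⟩ := hl
  obtain ⟨c, hhead, hlast, hmem, hchain⟩ := exists_chain _ A z z' rfl hz hz'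
  refine cross (c.map Multiset.card) k l ?_ ?_ k l ?_ ?_ le_rfl le_rfl
  · intro x hx
    obtain ⟨w, hw, rfl⟩ := List.mem_map.1 hx
    have hwL : Multiset.card w ∈ LSet A := ⟨w, hmem w hw, rfl⟩
    by_cases h1 : Multiset.card w ≤ k
    · exact Or.inl h1
    · right
      by_contra h2
      exact hemp _ (by omega) (by omega) hwL
  · unfold List.Chain'; rw [List.isChain_map]
    exact hchain
  · rw [map_head? _ c, hhead]
    simp [hcz']
  · rw [map_getLast?' _ c, hlast]
    simp [hcz]

lemma replicate_atom {g : G} (hg : g ≠ 0) :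
    IsAtomM (Multiset.replicate (addOrderOf g) g) := by
  have hpos : 0 < addOrderOf g := addOrderOf_pos g
  refine ⟨?_, ?_, ?_⟩
  · intro h
    have := congrArg Multiset.card h
    simp only [Multiset.card_replicate, Multiset.card_zero] at this
    omega
  · rw [Multiset.sum_replicate]
    exact addOrderOf_nsmul_eq_zero g
  · intro t ht ht0 hts
    have htr : t = Multiset.replicate (Multiset.card t) g := by
      rw [Multiset.eq_replicate_card]
      intro b hb
      exact Multiset.eq_of_mem_replicate (Multiset.mem_of_le ht hb)
    have hsum : (Multiset.card t) • g = 0 := by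
      rw [← Multiset.sum_replicate, ← htr]
      exact hts
    have hdvd : addOrderOf g ∣ Multiset.card t := addOrderOf_dvd_of_nsmul_eq_zero hsum
    have hle : Multiset.card t ≤ addOrderOf g := by
      have := Multiset.card_le_card ht
      simpa using this
    have hne : Multiset.card t ≠ 0 := by
      simpa [Multiset.card_eq_zero] using ht0
    have : Multiset.card t = addOrderOf g := by
      rcases hdvd with ⟨c, hc⟩
      rcases c with _ | c
      · omega
      · rcases c with _ | c
        · omega
        · nlinarith [hpos]
    rw [htr, this]

lemma DeltaBG_nonempty (hG : 3 ≤ Fintype.card G) : (DeltaBG G).Nonempty := by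
  have hmain : ∃ A : Multiset G, ∃ a b : ℕ, a ∈ LSet A ∧ b ∈ LSet A ∧ a < b := by
    by_cases h2 : ∀ g : G, g + g = 0
    · -- elementary 2-group case
      obtain ⟨e₁, he₁⟩ := Fintype.exists_ne_of_one_lt_card (by omega) (0 : G)
      have hsd : (Finset.univ \ {(0:G), e₁}).Nonempty := by
        rw [← Finset.card_pos]
        have h1 : Finset.card {(0:G), e₁} ≤ 2 := Finset.card_insert_le _ _ |>.trans (by simp)
        have h2' := Finset.le_card_sdiff ({(0:G), e₁}) Finset.univ
        have h3 : Finset.card (Finset.univ : Finset G) = Fintype.card G := rfl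
        omega
      obtain ⟨e₂, he₂⟩ := hsd
      simp only [Finset.mem_sdiff, Finset.mem_insert, Finset.mem_singleton, not_or] at he₂
      have he₂0 : e₂ ≠ 0 := he₂.2.1
      have he₂1 : e₂ ≠ e₁ := he₂.2.2
      set s : G := e₁ + e₂ with hs
      have hneg : ∀ x : G, -x = x := fun x => neg_eq_of_add_eq_zero_right (h2 x)
      have hs0 : s ≠ 0 := by
        rw [hs]
        intro h
        rw [← neg_eq_iff_add_eq_zero.mpr h] at he₂1
        rw [hneg] at he₂1
        exact he₂1 rfl
      have hse₁ : s + e₁ = e₂ := by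
        rw [hs]
        have := h2 e₁
        rw [add_comm e₁ e₂, add_assoc, this, add_zero]
      have hse₂ : s + e₂ = e₁ := by
        rw [hs, add_assoc, h2 e₂, add_zero]
      have hT : IsAtomM (e₁ ::ₘ e₂ ::ₘ s ::ₘ 0) := by
        apply triple_atom
        · rw [hs]
          exact h2 _
        · exact he₁
        · exact he₂0
        · exact hs0
        · rw [← hs]; exact hs0
        · rw [add_comm e₁ s, hse₁]; exact he₂0
        · rw [add_comm e₂ s, hse₂]; exact he₁
      have hP1 : IsAtomM (e₁ ::ₘ e₁ ::ₘ 0) := pair_atom (h2 e₁) he₁ he₁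
      have hP2 : IsAtomM (e₂ ::ₘ e₂ ::ₘ 0) := pair_atom (h2 e₂) he₂0 he₂0
      have hP3 : IsAtomM (s ::ₘ s ::ₘ 0) := pair_atom (h2 s) hs0 hs0
      set A : Multiset G := e₁ ::ₘ e₁ ::ₘ e₂ ::ₘ e₂ ::ₘ s ::ₘ s ::ₘ 0 with hA
      refine ⟨A, 2, 3, ⟨(e₁ ::ₘ e₂ ::ₘ s ::ₘ 0) ::ₘ (e₁ ::ₘ e₂ ::ₘ s ::ₘ 0) ::ₘ 0, ⟨?_, ?_⟩, by simp⟩,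
        ⟨(e₁ ::ₘ e₁ ::ₘ 0) ::ₘ (e₂ ::ₘ e₂ ::ₘ 0) ::ₘ (s ::ₘ s ::ₘ 0) ::ₘ 0, ⟨?_, ?_⟩, by simp⟩, by omega⟩
      · intro u hu
        rcases Multiset.mem_cons.1 hu with h | h
        · rw [h]; exact hT
        · rcases Multiset.mem_cons.1 h with h | h
          · rw [h]; exact hT
          · simp at h
      · rw [hA]
        ext x
        simp only [Multiset.sum_cons, Multiset.sum_zero, Multiset.count_cons, Multiset.count_add,
          Multiset.count_zero, add_zero]
        split_ifs <;> omega
      · intro u hu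
        rcases Multiset.mem_cons.1 hu with h | h
        · rw [h]; exact hP1
        · rcases Multiset.mem_cons.1 h with h | h
          · rw [h]; exact hP2
          · rcases Multiset.mem_cons.1 h with h | h
            · rw [h]; exact hP3
            · simp at h
      · rw [hA]
        ext x
        simp only [Multiset.sum_cons, Multiset.sum_zero, Multiset.count_cons, Multiset.count_add,
          Multiset.count_zero, add_zero]
        split_ifs <;> omega
    · push_neg at h2
      obtain ⟨g, hg2⟩ := h2
      have hg0 : g ≠ 0 := by
        intro h
        rw [h] at hg2
        simp at hg2
      set n : ℕ := addOrderOf g with hn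
      have hpos : 0 < n := addOrderOf_pos g
      have hn1 : n ≠ 1 := by
        intro h
        have := AddMonoid.addOrderOf_eq_one_iff.mp h
        exact hg0 this
      have hn2 : n ≠ 2 := by
        intro h
        have : (2 : ℕ) • g = 0 := by
          rw [← h, hn]
          exact addOrderOf_nsmul_eq_zero g
        rw [two_nsmul] at this
        exact hg2 this
      have hn3 : 3 ≤ n := by omega
      have hgneg : g ≠ -g := by
        intro h
        apply hg2
        nth_rewrite 2 [h]
        simp
      have hU : IsAtomM (Multiset.replicate n g) := replicate_atom hg0
      have hW : IsAtomM (Multiset.replicate n (-g)) := by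
        have := replicate_atom (g := -g) (by simpa using hg0)
        rwa [addOrderOf_neg] at this
      have hV : IsAtomM (g ::ₘ (-g) ::ₘ 0) := pair_atom (by simp) hg0 (by simpa using hg0)
      set A : Multiset G := Multiset.replicate n g + Multiset.replicate n (-g) with hA
      refine ⟨A, 2, n, ⟨Multiset.replicate n g ::ₘ Multiset.replicate n (-g) ::ₘ 0, ⟨?_, ?_⟩, by simp⟩,
        ⟨Multiset.replicate n (g ::ₘ (-g) ::ₘ 0), ⟨?_, ?_⟩, by simp⟩, by omega⟩
      · intro u hu
        rcases Multiset.mem_cons.1 hu with h | h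
        · rw [h]; exact hU
        · rcases Multiset.mem_cons.1 h with h | h
          · rw [h]; exact hW
          · simp at h
      · simp [hA]
      · intro u hu
        rw [Multiset.eq_of_mem_replicate hu]
        exact hV
      · rw [Multiset.sum_replicate, hA]
        induction n with
        | zero => simp
        | succ m ihm =>
          rw [succ_nsmul, ihm, Multiset.replicate_succ, Multiset.replicate_succ]
          ext x
          simp only [Multiset.count_cons, Multiset.count_add, Multiset.count_zero, add_zero]
          split_ifs <;> omega
  obtain ⟨A, a, b, ha, hb, hab⟩ := hmain
  obtain ⟨x, y, hx, hy, hxy, hgap⟩ := gap_exists (b - a) (LSet A) a b le_rfl ha hb hab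
  have hx' := hx
  obtain ⟨z, hz, -⟩ := hx'
  exact ⟨y - x, A, fact_sum_eq_zero hz, x, y, hx, hy, hxy, hgap, rfl⟩

end AuxGY

/-- Proposition 2.3: for a finite abelian group `G` with `|G| ≥ 3`, the set of
distances `Δ(G)` of the monoid of zero-sum sequences over `G` is a finite nonempty
interval with minimum `1`, i.e. `Δ(G) = [1, max Δ(G)]`. -/
theorem deltaSet_of_finite_abelian_group_is_interval
    {G : Type*} [AddCommGroup G] [Fintype G] (hG : 3 ≤ Fintype.card G) :
    (DeltaMonoid ↥(BlockMonoid G)).Finite ∧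
    (DeltaMonoid ↥(BlockMonoid G)).Nonempty ∧
    DeltaMonoid ↥(BlockMonoid G) = Set.Icc 1 (sSup (DeltaMonoid ↥(BlockMonoid G))) := by
  classical
  have hDeq : DeltaMonoid ↥(BlockMonoid G) = DeltaBG G := deltaMonoid_eq
  rw [hDeq]
  have hbdd : ∀ d ∈ DeltaBG G, 1 ≤ d ∧ d ≤ NN G := by
    rintro d ⟨A, hA0, k, l, hk, hl, hkl, hgap, rfl⟩
    refine ⟨by omega, ?_⟩
    have := adjacent_gap_le hk hl hkl hgap
    omega
  have hfin : (DeltaBG G).Finite :=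
    Set.Finite.subset (Set.finite_Icc 1 (NN G)) (fun d hd => Set.mem_Icc.mpr (hbdd d hd))
  have hne : (DeltaBG G).Nonempty := DeltaBG_nonempty hG
  refine ⟨hfin, hne, ?_⟩
  have hMmem : sSup (DeltaBG G) ∈ DeltaBG G := Set.Nonempty.csSup_mem hne hfin
  apply Set.Subset.antisymm
  · intro d hd
    exact Set.mem_Icc.mpr ⟨(hbdd d hd).1, le_csSup hfin.bddAbove hd⟩
  · intro e hee
    rw [Set.mem_Icc] at hee
    rcases eq_or_lt_of_le hee.2 with h | h
    · rwa [h]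
    · obtain ⟨A, hA0, k, l, hk, hl, hkl, hgap, hMeq⟩ := hMmem
      exact gap_down (Multiset.card A) A rfl k l e hee.1 (by omega) hk hl hgap


end
end ArXivSeminormal
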